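/- A pure one-dimensional simplicial complex Δ is connected if and only if Δ is vertex decomposable. -/

import Mathlib

open Finset

/-- An (abstract) simplicial complex on vertex set `V`: a downward closed
family of finite subsets of `V`. -/
structure SimplicialComplex (V : Type*) where
  faces : Set (Finset V)
  down_closed : ∀ ⦃F G : Finset V⦄, F ∈ faces → G ⊆ F → G ∈ faces

namespace SimplicialComplex

variable {V : Type*}

/-- A facet is a maximal face. -/
def IsFacet (Δ : SimplicialComplex V) (F : Finset V) : Prop :=
  F ∈ Δ.faces ∧ ∀ G ∈ Δ.faces, F ⊆ G → F = G

/-- The deletion `del_Δ(x)`. -/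
def del [DecidableEq V] (Δ : SimplicialComplex V) (x : V) : SimplicialComplex V where
  faces := {F | F ∈ Δ.faces ∧ x ∉ F}
  down_closed := fun _F _G hF hG => ⟨Δ.down_closed hF.1 hG, fun hx => hF.2 (hG hx)⟩

/-- The link `lk_Δ(x)`. -/
def link [DecidableEq V] (Δ : SimplicialComplex V) (x : V) : SimplicialComplex V where
  faces := {F | x ∉ F ∧ insert x F ∈ Δ.faces}
  down_closed := fun _F _G hF hG =>
    ⟨fun hx => hF.1 (hG hx), Δ.down_closed hF.2 (Finset.insert_subset_insert x hG)⟩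

/-- The simplex `⟨F⟩` on a finite vertex set `F`. -/
def simplex (F : Finset V) : SimplicialComplex V where
  faces := {G | G ⊆ F}
  down_closed := fun _ _ hF hG => hG.trans hF

/-- Vertex decomposability (non-pure sense). -/
inductive IsVertexDecomposable [DecidableEq V] : SimplicialComplex V → Prop
  | simplex (Δ : SimplicialComplex V) (F : Finset V) (h : Δ.faces = {G | G ⊆ F}) :
      IsVertexDecomposable Δ
  | shed (Δ : SimplicialComplex V) (x : V)
      (hdel : IsVertexDecomposable (Δ.del x))
      (hlink : IsVertexDecomposable (Δ.link x))
      (hfacet : ∀ F, (Δ.del x).IsFacet F → Δ.IsFacet F) :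
      IsVertexDecomposable Δ

/-- Shellability (non-pure sense): an ordering `F 0 < F 1 < ⋯` of all the
facets such that for `i < j` there are `v ∈ F j \ F i` and `l < j` with
`F j \ F l = {v}`. -/
def IsShellable [DecidableEq V] (Δ : SimplicialComplex V) : Prop :=
  ∃ (m : ℕ) (F : Fin m → Finset V),
    Function.Injective F ∧
    (∀ G, Δ.IsFacet G ↔ ∃ i, F i = G) ∧
    ∀ i j : Fin m, i < j → ∃ v ∈ F j, v ∉ F i ∧ ∃ l, l < j ∧ F j \ F l = {v}

/-- A simplicial complex is pure if all facets have the same cardinality. -/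
def IsPure (Δ : SimplicialComplex V) : Prop :=
  ∀ F G, Δ.IsFacet F → Δ.IsFacet G → F.card = G.card

/-- The `(s 0, …, s (n-1))`-expansion of a simplicial complex on `{x_0, …, x_(n-1)}`.
The vertex `x_{ij}` (for `1 ≤ j ≤ s i`) is encoded as the pair `(i, s i - j)`;
so the copies of `x i` are the pairs `(i, r)` with `r < s i`.  The faces are
exactly the subsets of the sets `{x_{i₁ r₁}, …, x_{i_k r_k}}` where
`{x_{i₁}, …, x_{i_k}}` is a face (equivalently, a facet) of `Δ`. -/
def expansion {n : ℕ} (Δ : SimplicialComplex (Fin n)) (s : Fin n → ℕ) :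
    SimplicialComplex (Fin n × ℕ) where
  faces := {E | E.image Prod.fst ∈ Δ.faces ∧ (∀ p ∈ E, p.2 < s p.1) ∧
    ∀ p ∈ E, ∀ q ∈ E, p.1 = q.1 → p = q}
  down_closed := fun _E _G hE hG =>
    ⟨Δ.down_closed hE.1 (Finset.image_subset_image hG),
     fun p hp => hE.2.1 p (hG hp),
     fun p hp q hq => hE.2.2 p (hG hp) q (hG hq)⟩

/-- Restriction of a simplicial complex to a subtype of the vertices. -/
def restrict (Δ : SimplicialComplex V) (P : V → Prop) : SimplicialComplex {v // P v} where
  faces := {F | F.map (Function.Embedding.subtype P) ∈ Δ.faces}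
  down_closed := fun _F _G hF hG =>
    Δ.down_closed hF (Finset.map_subset_map.mpr hG)

end SimplicialComplex

namespace SimplicialComplex

/-- A simplicial complex is connected if any two of its vertices are joined by
a path of edges (faces with two elements). -/
def IsConnected [DecidableEq V] (Δ : SimplicialComplex V) : Prop :=
  ∀ x y : V, ({x} : Finset V) ∈ Δ.faces → ({y} : Finset V) ∈ Δ.faces →
    Relation.ReflTransGen (fun a b => ({a, b} : Finset V) ∈ Δ.faces) x y

end SimplicialComplex

set_option linter.unusedSectionVars false

section Aux

open SimplicialComplex

namespace VDAux

variable {V : Type*} [Fintype V] [DecidableEq V]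

lemma exists_facet_superset (Δ : SimplicialComplex V) {F : Finset V} (hF : F ∈ Δ.faces) :
    ∃ G, Δ.IsFacet G ∧ F ⊆ G := by
  have hfin : ({G | G ∈ Δ.faces ∧ F ⊆ G} : Set (Finset V)).Finite := Set.toFinite _
  obtain ⟨G, hG, hmax⟩ := Set.Finite.exists_maximalFor Finset.card _ hfin ⟨F, hF, subset_rfl⟩
  refine ⟨G, ⟨hG.1, ?_⟩, hG.2⟩
  intro H hH hGH
  have hmem : H ∈ {G | G ∈ Δ.faces ∧ F ⊆ G} := ⟨hH, hG.2.trans hGH⟩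
  have hc := hmax hmem (Finset.card_le_card hGH)
  exact Finset.eq_of_subset_of_card_le hGH hc

lemma face_card_le_two (Δ : SimplicialComplex V) (hpure : ∀ F, Δ.IsFacet F → F.card = 2)
    {F : Finset V} (hF : F ∈ Δ.faces) : F.card ≤ 2 := by
  obtain ⟨G, hG, hFG⟩ := exists_facet_superset Δ hF
  calc F.card ≤ G.card := Finset.card_le_card hFG
    _ = 2 := hpure G hG

lemma exists_neighbor {R : V → V → Prop} {y z : V} (h : Relation.ReflTransGen R y z) :
    y = z ∨ ∃ w, w ≠ y ∧ R y w := by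
  induction h with
  | refl => exact Or.inl rfl
  | @tail b c hyb hbc ih =>
    rcases ih with rfl | hw
    · by_cases hcy : c = y
      · exact Or.inl hcy.symm
      · exact Or.inr ⟨c, hcy, hbc⟩
    · exact Or.inr hw

/-- zero-dimensional complexes on a nonempty vertex set are vertex decomposable -/
lemma zeroDim_vd : ∀ (S : Finset V), S.Nonempty →
    ∀ Γ : SimplicialComplex V, Γ.faces = {F | F.card ≤ 1 ∧ ∀ v ∈ F, v ∈ S} →
    IsVertexDecomposable Γ := by
  intro S
  induction S using Finset.strongInduction with
  | _ S ih =>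
    intro hS Γ hΓ
    obtain ⟨z, hz⟩ := hS
    by_cases hrest : (S.erase z).Nonempty
    · have hdelfaces : (Γ.del z).faces = {F | F.card ≤ 1 ∧ ∀ v ∈ F, v ∈ S.erase z} := by
        ext F
        show F ∈ Γ.faces ∧ z ∉ F ↔ _
        rw [hΓ]
        constructor
        · rintro ⟨⟨hc, hsub⟩, hx⟩
          exact ⟨hc, fun v hv => Finset.mem_erase.mpr ⟨fun h => hx (h ▸ hv), hsub v hv⟩⟩
        · rintro ⟨hc, hsub⟩
          exact ⟨⟨hc, fun v hv => Finset.mem_of_mem_erase (hsub v hv)⟩,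
            fun hzF => (Finset.mem_erase.mp (hsub z hzF)).1 rfl⟩
      refine IsVertexDecomposable.shed Γ z ?_ ?_ ?_
      · exact ih (S.erase z) (Finset.erase_ssubset hz) hrest _ hdelfaces
      · refine IsVertexDecomposable.simplex _ ∅ ?_
        ext F
        show z ∉ F ∧ insert z F ∈ Γ.faces ↔ F ⊆ ∅
        rw [hΓ]
        constructor
        · rintro ⟨hzF, hc, hsub⟩
          rw [Finset.subset_empty]
          by_contra hne
          obtain ⟨w, hw⟩ := Finset.nonempty_iff_ne_empty.mpr hne
          have hwz : w ≠ z := fun h => hzF (h ▸ hw)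
          have hle : ({z, w} : Finset V).card ≤ (insert z F).card := by
            apply Finset.card_le_card
            intro u hu
            rcases Finset.mem_insert.mp hu with rfl | hu
            · exact Finset.mem_insert_self _ _
            · rw [Finset.mem_singleton] at hu
              exact hu ▸ Finset.mem_insert_of_mem hw
          rw [Finset.card_pair (Ne.symm hwz)] at hle
          omega
        · intro h
          rw [Finset.subset_empty] at h
          subst h
          exact ⟨Finset.notMem_empty z, by simp [hz]⟩
      · intro F hF
        obtain ⟨w, hw⟩ := hrest
        have hwface : ({w} : Finset V) ∈ (Γ.del z).faces := by
          rw [hdelfaces]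
          exact ⟨by simp, by simpa using hw⟩
        have hFfaces := hF.1
        rw [hdelfaces] at hFfaces
        obtain ⟨hc, hsub⟩ := hFfaces
        rcases F.eq_empty_or_nonempty with rfl | hne
        · exact absurd (hF.2 _ hwface (Finset.empty_subset _)) (Ne.symm (Finset.singleton_ne_empty w))
        · obtain ⟨y, rfl⟩ := Finset.card_eq_one.mp (le_antisymm hc hne.card_pos)
          constructor
          · rw [hΓ]
            exact ⟨by simp, fun v hv => Finset.mem_of_mem_erase (hsub v hv)⟩
          · intro G hG hyG
            rw [hΓ] at hG
            exact Finset.eq_of_subset_of_card_le hyG (by simpa using hG.1)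
    · -- S = {z}
      have hSz : S = {z} := by
        apply Finset.eq_singleton_iff_unique_mem.mpr
        refine ⟨hz, fun w hw => ?_⟩
        by_contra hwz
        exact hrest ⟨w, Finset.mem_erase.mpr ⟨hwz, hw⟩⟩
      refine IsVertexDecomposable.simplex Γ {z} ?_
      rw [hΓ, hSz]
      ext F
      constructor
      · rintro ⟨hc, hsub⟩
        intro v hv
        exact hsub v hv
      · intro h
        exact ⟨le_trans (Finset.card_le_card h) (by simp), fun v hv => h hv⟩

noncomputable def verts (Γ : SimplicialComplex V) : Finset V :=
  (Set.toFinite {v | ({v} : Finset V) ∈ Γ.faces}).toFinset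

lemma mem_verts {Γ : SimplicialComplex V} {v : V} :
    v ∈ verts Γ ↔ ({v} : Finset V) ∈ Γ.faces := Set.Finite.mem_toFinset _

lemma face_subset_verts {Γ : SimplicialComplex V} {F : Finset V} (hF : F ∈ Γ.faces) :
    F ⊆ verts Γ := fun v hv =>
  mem_verts.mpr (Γ.down_closed hF (Finset.singleton_subset_iff.mpr hv))

def graphOf (Γ : SimplicialComplex V) : SimpleGraph V where
  Adj a b := a ≠ b ∧ ({a, b} : Finset V) ∈ Γ.faces
  symm := by
    constructor
    rintro a b ⟨h1, h2⟩
    exact ⟨h1.symm, by rwa [Finset.pair_comm]⟩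
  loopless := ⟨fun a h => h.1 rfl⟩

lemma reach_of_connected {Γ : SimplicialComplex V} (h : Γ.IsConnected) {a b : V}
    (ha : ({a} : Finset V) ∈ Γ.faces) (hb : ({b} : Finset V) ∈ Γ.faces) :
    (graphOf Γ).Reachable a b := by
  have hab := h a b ha hb
  clear hb
  induction hab with
  | refl => exact SimpleGraph.Reachable.refl a
  | @tail p q hap hpq ih =>
    by_cases hpq' : p = q
    · exact hpq' ▸ ih
    · exact ih.trans (SimpleGraph.Adj.reachable (And.intro hpq' hpq))

lemma walk_to_del {Γ : SimplicialComplex V} (x : V) :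
    ∀ {a b : V} (w : (graphOf Γ).Walk a b), x ∉ w.support →
    Relation.ReflTransGen (fun p q => ({p, q} : Finset V) ∈ (Γ.del x).faces) a b := by
  intro a b w
  induction w with
  | nil => intro _; exact Relation.ReflTransGen.refl
  | @cons a c b h p ih =>
    intro hx
    rw [SimpleGraph.Walk.support_cons, List.mem_cons] at hx
    push_neg at hx
    refine Relation.ReflTransGen.head ⟨And.right h, ?_⟩ (ih hx.2)
    intro hxm
    rcases Finset.mem_insert.mp hxm with rfl | hxm
    · exact hx.1 rfl
    · rw [Finset.mem_singleton] at hxm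
      exact hx.2 (hxm ▸ p.start_mem_support)

lemma connected_to_vd : ∀ (n : ℕ) (Γ : SimplicialComplex V), (verts Γ).card ≤ n →
    Γ.faces.Nonempty → (∀ F, Γ.IsFacet F → F.card = 2) → Γ.IsConnected →
    IsVertexDecomposable Γ := by
  intro n
  induction n with
  | zero =>
    intro Γ hcard hne hpure _
    obtain ⟨F₀, hF₀⟩ := hne
    obtain ⟨E, hE, -⟩ := exists_facet_superset Γ (Γ.down_closed hF₀ (Finset.empty_subset _))
    have hE2 := hpure E hE
    have : E ⊆ verts Γ := face_subset_verts hE.1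
    have := Finset.card_le_card this
    omega
  | succ n ih =>
    intro Γ hcard hne hpure hconn
    obtain ⟨F₀, hF₀⟩ := hne
    have hemp : (∅ : Finset V) ∈ Γ.faces := Γ.down_closed hF₀ (Finset.empty_subset _)
    obtain ⟨E, hE, -⟩ := exists_facet_superset Γ hemp
    have hE2 := hpure E hE
    obtain ⟨a, b, hab, rfl⟩ := Finset.card_eq_two.mp hE2
    have hEsub : ({a, b} : Finset V) ⊆ verts Γ := face_subset_verts hE.1
    have ha : a ∈ verts Γ := hEsub (Finset.mem_insert_self a _)
    by_cases hbig : 3 ≤ (verts Γ).card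
    · -- inductive shed step
      set r := a with hr
      have hSne : ((verts Γ).erase r).Nonempty := by
        rw [← Finset.card_pos, Finset.card_erase_of_mem ha]
        omega
      obtain ⟨x, hxS, hxmax⟩ := Finset.exists_max_image ((verts Γ).erase r)
        (fun v => (graphOf Γ).dist r v) hSne
      have hxr : x ≠ r := (Finset.mem_erase.mp hxS).1
      have hxV : x ∈ verts Γ := (Finset.mem_erase.mp hxS).2
      -- every vertex y ≠ x is joined to r in the deletion
      have hkey : ∀ y, y ∈ verts Γ → y ≠ x →
          Relation.ReflTransGen (fun p q => ({p, q} : Finset V) ∈ (Γ.del x).faces) r y := by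
        intro y hyV hyx
        have hreach : (graphOf Γ).Reachable r y :=
          reach_of_connected hconn (mem_verts.mp ha) (mem_verts.mp hyV)
        obtain ⟨w, hw⟩ := hreach.exists_walk_length_eq_dist
        refine walk_to_del x w ?_
        intro hxsup
        have h1 : (graphOf Γ).dist r x ≤ (w.takeUntil x hxsup).length :=
          SimpleGraph.dist_le _
        have h2 : (graphOf Γ).dist x y ≤ (w.dropUntil x hxsup).length :=
          SimpleGraph.dist_le _
        have h3 : (w.takeUntil x hxsup).length + (w.dropUntil x hxsup).length = w.length := by
          have := congrArg SimpleGraph.Walk.length (w.take_spec hxsup)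
          rwa [SimpleGraph.Walk.length_append] at this
        have hxy : (graphOf Γ).Reachable x y :=
          reach_of_connected hconn (mem_verts.mp hxV) (mem_verts.mp hyV)
        have h4 : (graphOf Γ).dist x y ≠ 0 := by
          intro h0
          exact hyx.symm (hxy.dist_eq_zero_iff.mp h0)
        by_cases hyr : y = r
        · subst hyr
          rw [SimpleGraph.dist_self] at hw
          omega
        · have h5 : (graphOf Γ).dist r y ≤ (graphOf Γ).dist r x :=
            hxmax y (Finset.mem_erase.mpr ⟨hyr, hyV⟩)
          omega
      have hsymm : Symmetric (fun p q => ({p, q} : Finset V) ∈ (Γ.del x).faces) := by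
        intro p q h
        show ({q, p} : Finset V) ∈ (Γ.del x).faces
        rw [Finset.pair_comm]
        exact h
      have hdelconn : (Γ.del x).IsConnected := by
        intro y z hy hz
        have hy' : ({y} : Finset V) ∈ Γ.faces := hy.1
        have hz' : ({z} : Finset V) ∈ Γ.faces := hz.1
        have hyx : y ≠ x := fun h => hy.2 (by simp [h])
        have hzx : z ≠ x := fun h => hz.2 (by simp [h])
        exact ((@Std.Symm.symm _ _ (@Relation.ReflTransGen.stdSymm _ _ ⟨fun _ _ h => hsymm h⟩) _ _)
          (hkey y (mem_verts.mpr hy') hyx)).trans (hkey z (mem_verts.mpr hz') hzx)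
      have hvertsdel : verts (Γ.del x) = (verts Γ).erase x := by
        ext v
        rw [mem_verts, Finset.mem_erase, mem_verts]
        show ({v} : Finset V) ∈ Γ.faces ∧ x ∉ ({v} : Finset V) ↔ _
        simp [and_comm, eq_comm]
      have hdelne : (Γ.del x).faces.Nonempty := ⟨∅, hemp, Finset.notMem_empty x⟩
      have hfacet : ∀ F, (Γ.del x).IsFacet F → Γ.IsFacet F := by
        intro F hF
        have hFface : F ∈ Γ.faces := hF.1.1
        have hFc : F.card ≤ 2 := face_card_le_two Γ hpure hFface
        rcases Nat.lt_or_ge F.card 2 with hlt | hge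
        · exfalso
          have hcard2 : 2 ≤ ((verts Γ).erase x).card := by
            rw [Finset.card_erase_of_mem hxV]; omega
          rcases F.eq_empty_or_nonempty with rfl | hFne
          · obtain ⟨w, hwmem⟩ := Finset.card_pos.mp (by omega : 0 < ((verts Γ).erase x).card)
            have hwface : ({w} : Finset V) ∈ (Γ.del x).faces := by
              rw [← mem_verts, hvertsdel]; exact hwmem
            exact Ne.symm (Finset.singleton_ne_empty w)
              (hF.2 _ hwface (Finset.empty_subset _))
          · obtain ⟨y, rfl⟩ := Finset.card_eq_one.mp (le_antisymm (by omega) hFne.card_pos)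
            have hyV : y ∈ (verts Γ).erase x := by
              rw [← hvertsdel, mem_verts]; exact hF.1
            obtain ⟨w, hwmem, hwy⟩ := Finset.exists_mem_ne (s := (verts Γ).erase x) (by omega) y
            have hwdel : ({w} : Finset V) ∈ (Γ.del x).faces := by
              rw [← mem_verts, hvertsdel]; exact hwmem
            have hydel : ({y} : Finset V) ∈ (Γ.del x).faces := hF.1
            have hpath := hdelconn y w hydel hwdel
            rcases exists_neighbor hpath with rfl | ⟨u, huy, hu⟩
            · exact hwy rfl
            · have : ({y} : Finset V) = {y, u} :=
                hF.2 _ hu (Finset.singleton_subset_iff.mpr (Finset.mem_insert_self y _))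
              exact huy (by
                have : u ∈ ({y} : Finset V) := this ▸ Finset.mem_insert_of_mem
                  (Finset.mem_singleton_self u)
                simpa using this)
        · have hFc2 : F.card = 2 := le_antisymm hFc hge
          obtain ⟨G, hG, hFG⟩ := exists_facet_superset Γ hFface
          have : F = G := Finset.eq_of_subset_of_card_le hFG (by rw [hpure G hG, hFc2])
          exact this ▸ hG
      refine IsVertexDecomposable.shed Γ x ?_ ?_ hfacet
      · refine ih (Γ.del x) ?_ hdelne (fun F hF => hpure F (hfacet F hF)) hdelconn
        rw [hvertsdel, Finset.card_erase_of_mem hxV]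
        omega
      · -- link is zero-dimensional on the neighbors of x
        set N : Finset V :=
          (Set.toFinite {v | v ≠ x ∧ ({x, v} : Finset V) ∈ Γ.faces}).toFinset with hN
        have hmemN : ∀ v, v ∈ N ↔ v ≠ x ∧ ({x, v} : Finset V) ∈ Γ.faces :=
          fun v => Set.Finite.mem_toFinset _
        have hNne : N.Nonempty := by
          obtain ⟨G, hG, hxG⟩ := exists_facet_superset Γ (mem_verts.mp hxV)
          obtain ⟨p, q, hpq, rfl⟩ := Finset.card_eq_two.mp (hpure G hG)
          have hxpq : x ∈ ({p, q} : Finset V) := hxG (Finset.mem_singleton_self x)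
          rcases Finset.mem_insert.mp hxpq with rfl | hxq
          · exact ⟨q, (hmemN q).mpr ⟨fun h => hpq h.symm, hG.1⟩⟩
          · rw [Finset.mem_singleton] at hxq
            subst hxq
            refine ⟨p, (hmemN p).mpr ⟨hpq, ?_⟩⟩
            rw [Finset.pair_comm]
            exact hG.1
        refine zeroDim_vd N hNne _ ?_
        ext F
        show x ∉ F ∧ insert x F ∈ Γ.faces ↔ _
        constructor
        · rintro ⟨hxF, hins⟩
          have hc : (insert x F).card ≤ 2 := face_card_le_two Γ hpure hins
          rw [Finset.card_insert_of_notMem hxF] at hc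
          refine ⟨by omega, fun v hv => (hmemN v).mpr ⟨fun h => hxF (h ▸ hv), ?_⟩⟩
          refine Γ.down_closed hins ?_
          intro u hu
          rcases Finset.mem_insert.mp hu with rfl | hu
          · exact Finset.mem_insert_self _ _
          · rw [Finset.mem_singleton] at hu
            exact hu ▸ Finset.mem_insert_of_mem hv
        · rintro ⟨hc, hsub⟩
          rcases F.eq_empty_or_nonempty with rfl | hFne
          · exact ⟨Finset.notMem_empty x, by simpa using mem_verts.mp hxV⟩
          · obtain ⟨v, rfl⟩ := Finset.card_eq_one.mp (le_antisymm hc hFne.card_pos)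
            have hv := (hmemN v).mp (hsub v (Finset.mem_singleton_self v))
            refine ⟨?_, by exact hv.2⟩
            rw [Finset.mem_singleton]
            exact fun h => hv.1 h.symm
    · -- base case: exactly two vertices, Γ is the simplex on {a, b}
      have hle : (verts Γ).card ≤ 2 := by omega
      have hVeq : verts Γ = {a, b} := by
        refine (Finset.eq_of_subset_of_card_le hEsub ?_).symm
        rw [Finset.card_pair hab]
        exact hle
      refine IsVertexDecomposable.simplex Γ {a, b} ?_
      ext G
      constructor
      · intro hG
        obtain ⟨H, hH, hGH⟩ := exists_facet_superset Γ hG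
        have hHsub : H ⊆ verts Γ := face_subset_verts hH.1
        rw [hVeq] at hHsub
        have : H = {a, b} := Finset.eq_of_subset_of_card_le hHsub
          (by rw [hpure H hH, Finset.card_pair hab])
        exact this ▸ hGH
      · intro hG
        exact Γ.down_closed hE.1 hG

lemma vd_to_connected : ∀ (Γ : SimplicialComplex V), IsVertexDecomposable Γ →
    Γ.faces.Nonempty → (∀ F, Γ.IsFacet F → F.card = 2) → Γ.IsConnected := by
  intro Γ hvd
  induction hvd with
  | simplex Γ F h =>
    intro _ _ a b ha hb
    rw [h] at ha hb
    refine Relation.ReflTransGen.single ?_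
    rw [h]
    intro v hv
    rcases Finset.mem_insert.mp hv with rfl | hv
    · exact ha (Finset.mem_singleton_self v)
    · rw [Finset.mem_singleton] at hv
      exact hv ▸ hb (Finset.mem_singleton_self _)
  | shed Γ x hdel hlink hfacet ihdel ihlink =>
    intro hne hpure
    obtain ⟨F₀, hF₀⟩ := hne
    have hemp : (∅ : Finset V) ∈ Γ.faces := Γ.down_closed hF₀ (Finset.empty_subset _)
    have hdelne : (Γ.del x).faces.Nonempty := ⟨∅, hemp, Finset.notMem_empty x⟩
    have hdelpure : ∀ F, (Γ.del x).IsFacet F → F.card = 2 :=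
      fun F hF => hpure F (hfacet F hF)
    have hdelconn := ihdel hdelne hdelpure
    have hkey : ∀ c, ({c} : Finset V) ∈ Γ.faces → ∃ c', c' ≠ x ∧
        ({c'} : Finset V) ∈ Γ.faces ∧
        Relation.ReflTransGen (fun p q => ({p, q} : Finset V) ∈ Γ.faces) c c' := by
      intro c hc
      by_cases hcx : c = x
      · obtain ⟨G, hG, hsub⟩ := exists_facet_superset Γ hc
        obtain ⟨p, q, hpq, rfl⟩ := Finset.card_eq_two.mp (hpure G hG)
        have hcpq : c ∈ ({p, q} : Finset V) := hsub (Finset.mem_singleton_self c)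
        have hez : ∃ z, z ≠ c ∧ ({c, z} : Finset V) ∈ Γ.faces := by
          rcases Finset.mem_insert.mp hcpq with rfl | hcq
          · exact ⟨q, fun h => hpq h.symm, hG.1⟩
          · rw [Finset.mem_singleton] at hcq
            subst hcq
            refine ⟨p, fun h => hpq h, ?_⟩
            rw [Finset.pair_comm]
            exact hG.1
        obtain ⟨z, hzc, hz⟩ := hez
        have hzface : ({z} : Finset V) ∈ Γ.faces := by
          refine Γ.down_closed hz ?_
          intro u hu
          rw [Finset.mem_singleton] at hu
          rw [hu]
          exact Finset.mem_insert_of_mem (Finset.mem_singleton_self z)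
        exact ⟨z, fun h => hzc (h.trans hcx.symm), hzface, Relation.ReflTransGen.single hz⟩
      · exact ⟨c, hcx, hc, Relation.ReflTransGen.refl⟩
    intro a b ha hb
    obtain ⟨a', hax, ha', hpa⟩ := hkey a ha
    obtain ⟨b', hbx, hb', hpb⟩ := hkey b hb
    have hsymm : Symmetric (fun p q => ({p, q} : Finset V) ∈ Γ.faces) := by
      intro p q h
      show ({q, p} : Finset V) ∈ Γ.faces
      rw [Finset.pair_comm]
      exact h
    have hmid : Relation.ReflTransGen (fun p q => ({p, q} : Finset V) ∈ Γ.faces) a' b' := by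
      have := hdelconn a' b'
        ⟨ha', by simp only [Finset.mem_singleton]; exact fun h => hax h.symm⟩
        ⟨hb', by simp only [Finset.mem_singleton]; exact fun h => hbx h.symm⟩
      exact Relation.ReflTransGen.mono (fun p q (h : ({p, q} : Finset V) ∈ (Γ.del x).faces) => h.1) _ _ this
    exact (hpa.trans hmid).trans ((@Std.Symm.symm _ _ (@Relation.ReflTransGen.stdSymm _ _ ⟨fun _ _ h => hsymm h⟩) _ _) hpb)

end VDAux

end Aux

open SimplicialComplex in
/-- a (nonempty, finite) pure one-dimensional simplicial complex
(every facet has exactly two vertices) is connected iff it is vertex decomposable. -/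
theorem pure_one_dimensional_connected_iff_vertexDecomposable {V : Type*}
    [Fintype V] [DecidableEq V] (Δ : SimplicialComplex V)
    (hne : Δ.faces.Nonempty) (hpure : ∀ F, Δ.IsFacet F → F.card = 2) :
    Δ.IsConnected ↔ IsVertexDecomposable Δ :=
  ⟨fun h => VDAux.connected_to_vd (VDAux.verts Δ).card Δ le_rfl hne hpure h,
   fun h => VDAux.vd_to_connected Δ h hne hpure⟩
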